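/- arXiv:2302.11379 — 3 statements merged into one kernel-verified Lean document; each statement's English description precedes it below -/
import Mathlib

section
/- Let T : [0,∞)^V → ℝ be the last-passage time T(ω) = max over directed paths γ from the origin to (n,...,n) of Σ_{v∈γ} ω_v, and for a vertex v let k_v(ω) be the infimum of x ≥ 0 such that some maximizing path for the configuration ω with ω_v replaced by x passes through v. Then for all x ≥ 0, T^{v→x}(ω) = T^{v→k_v}(ω) + (x − k_v)₊, where T^{v→x} denotes T evaluated at ω with the weight at v replaced by x and (·)₊ is the positive part. -/
open MeasureTheory

/-- An up-right nearest-neighbour step in the lattice (modelled on `ℕ^d`). -/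
def IsStep {d : ℕ} (u v : Fin d → ℕ) : Prop :=
  ∃ i : Fin d, v = Function.update u i (u i + 1)

/-- `γ` is a directed up-right nearest-neighbour path from `(0,…,0)` to `(n,…,n)`. -/
def IsPath (d n : ℕ) (γ : List (Fin d → ℕ)) : Prop :=
  γ.Chain' IsStep ∧ γ.head? = some (fun _ => 0) ∧ γ.getLast? = some (fun _ => n)

/-- The last-passage time: the maximal weight sum over directed paths. -/
noncomputable def passageTime (d n : ℕ) (ω : (Fin d → ℕ) → ℝ) : ℝ :=
  sSup {S : ℝ | ∃ γ : List (Fin d → ℕ), IsPath d n γ ∧ S = (γ.map ω).sum}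

/-- The critical weight `k_v`: the smallest `x ≥ 0` such that `v` lies on some maximizing
path for the configuration with the weight at `v` replaced by `x`. -/
noncomputable def critical (d n : ℕ) (ω : (Fin d → ℕ) → ℝ) (v : Fin d → ℕ) : ℝ :=
  sInf {x : ℝ | 0 ≤ x ∧ ∃ γ : List (Fin d → ℕ), IsPath d n γ ∧ v ∈ γ ∧
    (γ.map (Function.update ω v x)).sum = passageTime d n (Function.update ω v x)}

/-! ### Auxiliary lemmas -/

section Aux

variable {d n : ℕ}

/-- The "score" of a vertex: sum of its coordinates. -/
def lppScore {d : ℕ} (u : Fin d → ℕ) : ℕ := ∑ i, u i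

lemma lppScore_step {u w : Fin d → ℕ} (h : IsStep u w) : lppScore w = lppScore u + 1 := by
  obtain ⟨i, rfl⟩ := h
  unfold lppScore
  rw [Finset.sum_update_of_mem (Finset.mem_univ i)]
  have h2 : u i + ∑ j ∈ Finset.univ.erase i, u j = ∑ j, u j :=
    Finset.add_sum_erase _ _ (Finset.mem_univ i)
  rw [← Finset.sdiff_singleton_eq_erase] at h2
  omega

lemma isStep_le {u w : Fin d → ℕ} (h : IsStep u w) : ∀ i, u i ≤ w i := by
  obtain ⟨j, rfl⟩ := h
  intro i
  rcases eq_or_ne i j with rfl | hne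
  · simp
  · simp [Function.update_of_ne hne]

lemma path_ne_nil {γ : List (Fin d → ℕ)} (h : IsPath d n γ) : γ ≠ [] := by
  intro hnil; rw [hnil] at h; simp [IsPath] at h

lemma path_pairwise_le {γ : List (Fin d → ℕ)} (h : IsPath d n γ) :
    γ.Pairwise (fun u w => ∀ i, u i ≤ w i) := by
  haveI : IsTrans (Fin d → ℕ) (fun u w => ∀ i, u i ≤ w i) :=
    ⟨fun a b c h1 h2 i => le_trans (h1 i) (h2 i)⟩
  exact List.isChain_iff_pairwise.mp (h.1.imp fun a b hab => isStep_le hab)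

lemma path_pairwise_lt {γ : List (Fin d → ℕ)} (h : IsPath d n γ) :
    γ.Pairwise (fun u w => lppScore u < lppScore w) := by
  haveI : IsTrans (Fin d → ℕ) (fun u w => lppScore u < lppScore w) :=
    ⟨fun a b c h1 h2 => lt_trans h1 h2⟩
  exact List.isChain_iff_pairwise.mp
    (h.1.imp fun a b hab => by rw [lppScore_step hab]; omega)

lemma path_nodup {γ : List (Fin d → ℕ)} (h : IsPath d n γ) : γ.Nodup :=
  (path_pairwise_lt h).imp fun hlt => fun e => by rw [e] at hlt; exact lt_irrefl _ hlt

lemma path_mem_le {γ : List (Fin d → ℕ)} (h : IsPath d n γ) {u : Fin d → ℕ}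
    (hu : u ∈ γ) : ∀ i, u i ≤ n := by
  have hlast := h.2.2
  have hsplit : γ.dropLast ++ [fun _ => n] = γ :=
    List.dropLast_append_getLast? _ hlast
  have hp := path_pairwise_le h
  rw [← hsplit] at hp hu
  rw [List.pairwise_append] at hp
  rcases List.mem_append.mp hu with hu1 | hu2
  · intro i; exact hp.2.2 u hu1 (fun _ => n) (List.mem_singleton_self _) i
  · intro i
    have : u = fun _ => n := List.eq_of_mem_singleton hu2
    rw [this]

lemma path_length_le {γ : List (Fin d → ℕ)} (h : IsPath d n γ) :
    γ.length ≤ d * n + 1 := by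
  set m : List ℕ := γ.map lppScore with hm
  have hpl : m.Pairwise (· < ·) := by
    rw [hm, List.pairwise_map]; exact path_pairwise_lt h
  have hnd : m.Nodup := hpl.imp fun hlt => Nat.ne_of_lt hlt
  have hmem : ∀ a ∈ m, a < d * n + 1 := by
    intro a ha
    rw [hm, List.mem_map] at ha
    obtain ⟨u, hu, rfl⟩ := ha
    have : lppScore u ≤ d * n := by
      calc lppScore u ≤ ∑ _i : Fin d, n :=
            Finset.sum_le_sum fun i _ => path_mem_le h hu i
        _ = d * n := by simp [Finset.sum_const, mul_comm]
    omega
  have hsub : m.toFinset ⊆ Finset.range (d * n + 1) := by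
    intro a ha
    rw [Finset.mem_range]
    exact hmem a (List.mem_toFinset.mp ha)
  have := Finset.card_le_card hsub
  rw [List.toFinset_card_of_nodup hnd, Finset.card_range] at this
  calc γ.length = m.length := (List.length_map _).symm
    _ ≤ d * n + 1 := this

/-- The set of paths is finite. -/
lemma paths_finite : {γ : List (Fin d → ℕ) | IsPath d n γ}.Finite := by
  classical
  set g : (Fin d → Fin (n + 1)) → (Fin d → ℕ) := fun f i => (f i : ℕ) with hg
  have hsub : {γ : List (Fin d → ℕ) | IsPath d n γ} ⊆
      (List.map g) '' {l : List (Fin d → Fin (n + 1)) | l.length ≤ d * n + 1} := by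
    intro γ hγ
    refine ⟨γ.map (fun u i => (⟨min (u i) n, by omega⟩ : Fin (n + 1))), ?_, ?_⟩
    · simpa using path_length_le hγ
    · rw [List.map_map]
      have : ∀ u ∈ γ, (g ∘ fun u i => (⟨min (u i) n, by omega⟩ : Fin (n + 1))) u = u := by
        intro u hu
        funext i
        simp only [Function.comp_apply, hg]
        exact min_eq_left (path_mem_le hγ hu i)
      rw [List.map_congr_left this]; simp
  exact Set.Finite.subset (Set.Finite.image _ (List.finite_length_le _ _)) hsub

lemma sums_finite (w : (Fin d → ℕ) → ℝ) :
    {S : ℝ | ∃ γ : List (Fin d → ℕ), IsPath d n γ ∧ S = (γ.map w).sum}.Finite := by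
  apply Set.Finite.subset (Set.Finite.image (fun γ => (γ.map w).sum) (paths_finite (d := d) (n := n)))
  rintro S ⟨γ, hγ, rfl⟩
  exact ⟨γ, hγ, rfl⟩

/-- Existence of an up-right chain between comparable points. -/
lemma exists_chain (a b : Fin d → ℕ) (hab : ∀ i, a i ≤ b i) :
    ∃ γ : List (Fin d → ℕ), γ.Chain' IsStep ∧ γ.head? = some a ∧ γ.getLast? = some b := by
  classical
  generalize hN : (∑ i, (b i - a i)) = N
  induction N generalizing a with
  | zero =>
    have : a = b := by
      funext i
      have := Finset.sum_eq_zero_iff.mp hN i (Finset.mem_univ i)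
      have := hab i
      omega
    subst this
    exact ⟨[a], List.isChain_singleton a, rfl, rfl⟩
  | succ N ih =>
    have : ∃ i, a i < b i := by
      by_contra hcon
      push_neg at hcon
      have : ∑ i, (b i - a i) = 0 := Finset.sum_eq_zero fun i _ => by
        have := hcon i; omega
      omega
    obtain ⟨i, hi⟩ := this
    set a' : Fin d → ℕ := Function.update a i (a i + 1) with ha'
    have hab' : ∀ j, a' j ≤ b j := by
      intro j
      rcases eq_or_ne j i with rfl | hne
      · simp [ha']; omega
      · simp [ha', Function.update_of_ne hne]; exact hab j
    have hsum' : ∑ j, (b j - a' j) = N := by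
      have h1 : ∑ j, (b j - a j) = (b i - a i) + ∑ j ∈ Finset.univ.erase i, (b j - a j) :=
        (Finset.add_sum_erase _ _ (Finset.mem_univ i)).symm
      have h2 : ∑ j, (b j - a' j) = (b i - a' i) + ∑ j ∈ Finset.univ.erase i, (b j - a' j) :=
        (Finset.add_sum_erase _ _ (Finset.mem_univ i)).symm
      have h3 : ∑ j ∈ Finset.univ.erase i, (b j - a' j)
          = ∑ j ∈ Finset.univ.erase i, (b j - a j) :=
        Finset.sum_congr rfl fun j hj => by
          rw [ha', Function.update_of_ne (Finset.ne_of_mem_erase hj)]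
      have h4 : a' i = a i + 1 := by simp [ha']
      rw [hN] at h1
      omega
    obtain ⟨γ', hc', hh', hl'⟩ := ih a' hab' hsum'
    refine ⟨a :: γ', ?_, rfl, ?_⟩
    · rw [show List.Chain' IsStep (a :: γ') = List.IsChain IsStep (a :: γ') from rfl,
        List.isChain_cons]
      refine ⟨?_, hc'⟩
      intro y hy
      rw [hh'] at hy
      obtain rfl : a' = y := by simpa using hy
      exact ⟨i, ha'⟩
    · obtain ⟨z, t, rfl⟩ : ∃ z t, γ' = z :: t := by
        cases γ' with
        | nil => simp at hh'
        | cons z t => exact ⟨z, t, rfl⟩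
      rw [List.getLast?_cons_cons]
      exact hl'

lemma exists_path_through (hd : 1 ≤ d) (v : Fin d → ℕ) (hv : ∀ i, v i ≤ n) :
    ∃ γ : List (Fin d → ℕ), IsPath d n γ ∧ v ∈ γ := by
  obtain ⟨γ₁, hc₁, hh₁, hl₁⟩ := exists_chain (fun _ => 0) v (fun i => Nat.zero_le _)
  obtain ⟨γ₂, hc₂, hh₂, hl₂⟩ := exists_chain v (fun _ => n) hv
  obtain ⟨z, t, rfl⟩ : ∃ z t, γ₂ = z :: t := by
    cases γ₂ with
    | nil => simp at hh₂
    | cons z t => exact ⟨z, t, rfl⟩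
  have hz : z = v := by simpa using hh₂
  rw [hz] at hc₂ hl₂
  have hvγ₁ : v ∈ γ₁ := by
    have := List.dropLast_append_getLast? _ hl₁
    rw [← this]
    simp
  refine ⟨γ₁ ++ t, ⟨?_, ?_, ?_⟩, List.mem_append_left _ hvγ₁⟩
  · apply hc₁.append (List.isChain_cons.mp hc₂).2
    intro p hp q hq
    rw [hl₁] at hp
    obtain rfl : v = p := by simpa using hp
    exact (List.isChain_cons.mp hc₂).1 q hq
  · obtain ⟨z₁, t₁, rfl⟩ : ∃ z₁ t₁, γ₁ = z₁ :: t₁ := by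
      cases γ₁ with
      | nil => simp at hh₁
      | cons z₁ t₁ => exact ⟨z₁, t₁, rfl⟩
    simpa using hh₁
  · cases t with
    | nil =>
      rw [List.append_nil]
      rw [hl₁]
      simpa using hl₂
    | cons y s =>
      rw [List.getLast?_append_of_ne_nil _ (by simp)]
      simpa using hl₂

/-- Sum of a path with the weight at a vertex `v` on the path replaced. -/
lemma sum_update_mem {γ : List (Fin d → ℕ)} (hγ : IsPath d n γ) {v : Fin d → ℕ}
    (hvγ : v ∈ γ) (w : (Fin d → ℕ) → ℝ) (x : ℝ) :
    (γ.map (Function.update w v x)).sum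
      = x + (γ.map (Function.update w v 0)).sum := by
  classical
  have hperm := List.perm_cons_erase hvγ
  have hnd := path_nodup hγ
  have key : ∀ y : ℝ, (γ.map (Function.update w v y)).sum
      = y + ((γ.erase v).map w).sum := by
    intro y
    have := ((hperm.map (Function.update w v y)).sum_eq)
    rw [this]
    simp only [List.map_cons, List.sum_cons, Function.update_self]
    congr 1
    apply congrArg List.sum
    apply List.map_congr_left
    intro u hu
    have : u ≠ v := (hnd.mem_erase_iff.mp hu).1
    exact Function.update_of_ne this _ _
  rw [key x, key 0]
  ring

lemma sum_update_not_mem {γ : List (Fin d → ℕ)} {v : Fin d → ℕ}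
    (hvγ : v ∉ γ) (w : (Fin d → ℕ) → ℝ) (x : ℝ) :
    (γ.map (Function.update w v x)).sum = (γ.map w).sum := by
  congr 1
  apply List.map_congr_left
  intro u hu
  exact Function.update_of_ne (fun h => hvγ (by rw [← h]; exact hu)) _ _

end Aux

/-- `T^{v→x}(ω) = T^{v→k_v}(ω) + (x − k_v)₊` for all `x ≥ 0`. -/
theorem passageTime_update_eq (d n : ℕ) (hd : 1 ≤ d) (hn : 1 ≤ n)
    (ω : (Fin d → ℕ) → ℝ) (hω : ∀ u, 0 ≤ ω u)
    (v : Fin d → ℕ) (hv : ∀ i, v i ≤ n) (x : ℝ) (hx : 0 ≤ x) :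
    passageTime d n (Function.update ω v x)
      = passageTime d n (Function.update ω v (critical d n ω v))
        + max (x - critical d n ω v) 0 := by
  classical
  set ω0 : (Fin d → ℕ) → ℝ := Function.update ω v 0 with hω0
  set A : Set ℝ := {S | ∃ γ : List (Fin d → ℕ), IsPath d n γ ∧ v ∉ γ ∧ S = (γ.map ω).sum}
    with hA
  set B : Set ℝ := {S | ∃ γ : List (Fin d → ℕ), IsPath d n γ ∧ v ∈ γ ∧ S = (γ.map ω0).sum}
    with hB
  have hAfin : A.Finite := (sums_finite ω).subset (by rintro S ⟨γ, h1, _, h3⟩; exact ⟨γ, h1, h3⟩)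
  have hBfin : B.Finite := (sums_finite ω0).subset (by rintro S ⟨γ, h1, _, h3⟩; exact ⟨γ, h1, h3⟩)
  have hBne : B.Nonempty := by
    obtain ⟨γ, hγ, hvγ⟩ := exists_path_through hd v hv
    exact ⟨(γ.map ω0).sum, γ, hγ, hvγ, rfl⟩
  have hω0pos : ∀ u, 0 ≤ ω0 u := by
    intro u
    rw [hω0, Function.update_apply]
    split
    · exact le_refl 0
    · exact hω u
  have hMB : sSup B ∈ B := hBne.csSup_mem hBfin
  have hMBpos : 0 ≤ sSup B := by
    obtain ⟨γ, hγ, hvγ, hs⟩ := hMB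
    rw [hs]
    apply List.sum_nonneg
    intro a ha
    obtain ⟨u, _, rfl⟩ := List.mem_map.mp ha
    exact hω0pos u
  -- the key formula for T^{v→y}
  have key : ∀ y : ℝ, 0 ≤ y →
      passageTime d n (Function.update ω v y) = max (sSup A) (sSup B + y) := by
    intro y hy
    set Sy : Set ℝ := {S | ∃ γ : List (Fin d → ℕ), IsPath d n γ ∧
        S = (γ.map (Function.update ω v y)).sum} with hSy
    have hSyfin : Sy.Finite := sums_finite _
    have hSyne : Sy.Nonempty := by
      obtain ⟨γ, hγ, _⟩ := exists_path_through hd v hv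
      exact ⟨_, γ, hγ, rfl⟩
    have hwy : ∀ u, 0 ≤ Function.update ω v y u := by
      intro u
      rw [Function.update_apply]
      split
      · exact hy
      · exact hω u
    have hSypos : ∀ S ∈ Sy, 0 ≤ S := by
      rintro S ⟨γ, hγ, rfl⟩
      apply List.sum_nonneg
      intro a ha
      obtain ⟨u, _, rfl⟩ := List.mem_map.mp ha
      exact hwy u
    apply le_antisymm
    · -- T ≤ max
      obtain ⟨γ, hγ, hs⟩ := hSyne.csSup_mem hSyfin
      show sSup Sy ≤ _
      rw [hs]
      by_cases hmem : v ∈ γ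
      · rw [show Function.update ω v y = Function.update ω v y from rfl,
          sum_update_mem hγ hmem ω y]
        have : (γ.map ω0).sum ≤ sSup B :=
          le_csSup hBfin.bddAbove ⟨γ, hγ, hmem, rfl⟩
        have := this
        refine le_trans ?_ (le_max_right _ _)
        linarith
      · rw [sum_update_not_mem hmem ω y]
        refine le_trans ?_ (le_max_left _ _)
        exact le_csSup hAfin.bddAbove ⟨γ, hγ, hmem, rfl⟩
    · -- max ≤ T
      apply max_le
      · by_cases hAne : A.Nonempty
        · obtain ⟨γ, hγ, hnv, hs⟩ := hAne.csSup_mem hAfin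
          have h1 : sSup A = (γ.map (Function.update ω v y)).sum := by
            rw [hs, sum_update_not_mem hnv ω y]
          rw [h1]
          exact le_csSup hSyfin.bddAbove ⟨γ, hγ, rfl⟩
        · rw [Set.not_nonempty_iff_eq_empty.mp hAne, Real.sSup_empty]
          exact hSypos _ (hSyne.csSup_mem hSyfin)
      · obtain ⟨γ, hγ, hvγ, hs⟩ := hMB
        have h1 : sSup B + y = (γ.map (Function.update ω v y)).sum := by
          rw [sum_update_mem hγ hvγ ω y, hs]
          ring
        rw [h1]
        exact le_csSup hSyfin.bddAbove ⟨γ, hγ, rfl⟩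
  -- identify the critical value
  have hk : critical d n ω v = max (sSup A - sSup B) 0 := by
    have hset : {x : ℝ | 0 ≤ x ∧ ∃ γ : List (Fin d → ℕ), IsPath d n γ ∧ v ∈ γ ∧
        (γ.map (Function.update ω v x)).sum = passageTime d n (Function.update ω v x)}
        = Set.Ici (max (sSup A - sSup B) 0) := by
      ext y
      simp only [Set.mem_setOf_eq, Set.mem_Ici]
      constructor
      · rintro ⟨hy0, γ, hγ, hvγ, hsum⟩
        rw [key y hy0, sum_update_mem hγ hvγ ω y] at hsum
        have hle : (γ.map ω0).sum ≤ sSup B :=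
          le_csSup hBfin.bddAbove ⟨γ, hγ, hvγ, rfl⟩
        have hge : sSup A ≤ max (sSup A) (sSup B + y) := le_max_left _ _
        rw [← hsum] at hge
        apply max_le _ hy0
        linarith
      · intro hyk
        have hy0 : 0 ≤ y := le_trans (le_max_right _ _) hyk
        obtain ⟨γ, hγ, hvγ, hs⟩ := hMB
        refine ⟨hy0, γ, hγ, hvγ, ?_⟩
        rw [key y hy0, sum_update_mem hγ hvγ ω y, ← hs]
        have h1 : sSup A ≤ sSup B + y := by
          have := le_trans (le_max_left _ _) hyk
          linarith
        rw [max_eq_right h1]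
        ring
    rw [critical, hset, csInf_Ici]
  -- final arithmetic
  have hk0 : 0 ≤ critical d n ω v := by rw [hk]; exact le_max_right _ _
  rw [key x hx, key _ hk0, hk]
  set a := sSup A
  set b := sSup B
  rcases le_total (a - b) 0 with h | h
  · rw [max_eq_right h, add_zero, sub_zero, max_eq_right (by linarith : a ≤ b),
      max_eq_left hx, max_eq_right (by linarith : a ≤ b + x)]
  · rw [max_eq_left h, show b + (a - b) = a by ring, max_self]
    rcases le_total x (a - b) with h2 | h2
    · rw [max_eq_right (by linarith : x - (a - b) ≤ 0), add_zero,
        max_eq_left (by linarith : b + x ≤ a)]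
    · rw [max_eq_left (by linarith : (0:ℝ) ≤ x - (a - b)),
        max_eq_right (by linarith : a ≤ b + x)]
      ring
end

section
/- Let ω̃ be a square-integrable random variable, and k₀, k_t real constants. Assume E[ω̃ − k_t | ω̃ ≥ k_t] ≤ E[ω̃ − k_t | ω̃ ≥ max(k₀,k_t)] and P(ω̃ ≥ k₀)P(ω̃ ≥ k_t) ≤ P(ω̃ ≥ max(k₀,k_t)). Then Cov((ω̃−k₀)₊, (ω̃−k_t)₊) ≥ Var(ω̃ | ω̃ ≥ max(k₀,k_t)) · P(ω̃ ≥ max(k₀,k_t)). -/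
set_option maxHeartbeats 1000000

open MeasureTheory ProbabilityTheory

lemma my_integral_cond {Ω : Type*} [MeasurableSpace Ω] (μ : Measure Ω) (s : Set Ω) (f : Ω → ℝ) :
    ∫ x, f x ∂(μ[|s]) = (μ s).toReal⁻¹ * ∫ x in s, f x ∂μ := by
  rw [ProbabilityTheory.cond, integral_smul_measure, ENNReal.toReal_inv, smul_eq_mul]

lemma my_pos_part_integral {Ω : Type*} [MeasurableSpace Ω] (μ : Measure Ω)
    (X : Ω → ℝ) (hX : Measurable X) (k : ℝ) :
    ∫ ω, max (X ω - k) 0 ∂μ = ∫ ω in {ω | k ≤ X ω}, (X ω - k) ∂μ := by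
  rw [← integral_indicator (by exact measurableSet_le measurable_const hX)]
  refine integral_congr_ae (Filter.Eventually.of_forall fun ω => ?_)
  by_cases h : k ≤ X ω
  · simp [Set.indicator_of_mem, h, max_eq_left, sub_nonneg.2 h]
  · simp [Set.indicator_of_notMem, h, max_eq_right, sub_nonpos.2 (le_of_not_ge h)]

/-- Given the conditional expectation inequality and the probability inequality for
`A = {ω̃ ≥ max(k₀,k_t)}`, one has
`Cov((ω̃−k₀)₊, (ω̃−k_t)₊) ≥ Var(ω̃ | A) ⬝ P(A)`. -/
theorem cov_pos_parts_ge {Ω : Type*} [MeasurableSpace Ω] (μ : Measure Ω)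
    [IsProbabilityMeasure μ] (X : Ω → ℝ) (hX : Measurable X) (k₀ kt : ℝ)
    (hA : 0 < μ {ω | max k₀ kt ≤ X ω}) (h2 : MemLp X 2 μ)
    (hexp : (∫ ω, (X ω - kt) ∂(ProbabilityTheory.cond μ {ω | kt ≤ X ω}))
        ≤ ∫ ω, (X ω - kt) ∂(ProbabilityTheory.cond μ {ω | max k₀ kt ≤ X ω}))
    (hprob : (μ {ω | k₀ ≤ X ω}).toReal * (μ {ω | kt ≤ X ω}).toReal
        ≤ (μ {ω | max k₀ kt ≤ X ω}).toReal) :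
    variance X (ProbabilityTheory.cond μ {ω | max k₀ kt ≤ X ω})
        * (μ {ω | max k₀ kt ≤ X ω}).toReal
      ≤ (∫ ω, max (X ω - k₀) 0 * max (X ω - kt) 0 ∂μ)
        - (∫ ω, max (X ω - k₀) 0 ∂μ) * (∫ ω, max (X ω - kt) 0 ∂μ) := by
  set m := max k₀ kt with hm
  set A : Set Ω := {ω | m ≤ X ω} with hAdef
  set B0 : Set Ω := {ω | k₀ ≤ X ω} with hB0def
  set Bt : Set Ω := {ω | kt ≤ X ω} with hBtdef
  have hAmeas : MeasurableSet A := measurableSet_le measurable_const hX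
  have hB0meas : MeasurableSet B0 := measurableSet_le measurable_const hX
  have hBtmeas : MeasurableSet Bt := measurableSet_le measurable_const hX
  have hABt : A ⊆ Bt := fun ω hω => le_trans (le_max_right k₀ kt) hω
  have hAB0 : A ⊆ B0 := fun ω hω => le_trans (le_max_left k₀ kt) hω
  set p : ℝ := (μ A).toReal with hpdef
  set P0 : ℝ := (μ B0).toReal with hP0def
  set Pt : ℝ := (μ Bt).toReal with hPtdef
  have hpp : 0 < p := ENNReal.toReal_pos hA.ne' (measure_ne_top μ _)
  have hpPt : p ≤ Pt := ENNReal.toReal_mono (measure_ne_top μ _) (measure_mono hABt)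
  have hpP0 : p ≤ P0 := ENNReal.toReal_mono (measure_ne_top μ _) (measure_mono hAB0)
  have hPt1 : Pt ≤ 1 := by
    simpa using ENNReal.toReal_mono (by simp) (prob_le_one (μ := μ) (s := Bt))
  have hP01 : P0 ≤ 1 := by
    simpa using ENNReal.toReal_mono (by simp) (prob_le_one (μ := μ) (s := B0))
  have hPtpos : 0 < Pt := lt_of_lt_of_le hpp hpPt
  set E : ℝ := ∫ ω in A, X ω ∂μ with hEdef
  set Q : ℝ := ∫ ω in A, X ω * X ω ∂μ with hQdef
  have hXint : Integrable X μ := h2.integrable one_le_two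
  have hX2int : Integrable (fun ω => X ω * X ω) μ := by
    simpa [sq] using h2.integrable_sq
  -- conditional measure facts
  have hProbA : IsProbabilityMeasure (μ[|A]) := cond_isProbabilityMeasure hA.ne'
  have h2c : MemLp X 2 (μ[|A]) := by
    have := (h2.restrict A).smul_measure (c := (μ A)⁻¹) (ENNReal.inv_ne_top.2 hA.ne')
    simpa [ProbabilityTheory.cond] using this
  have hvar : variance X (μ[|A]) = p⁻¹ * Q - (p⁻¹ * E) ^ 2 := by
    rw [variance_eq_sub h2c]
    have e1 : (μ[|A])[X ^ 2] = p⁻¹ * Q := by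
      rw [show ((μ[|A])[X ^ 2]) = ∫ x, (X ^ 2) x ∂(μ[|A]) from rfl, my_integral_cond]
      congr 1
      refine integral_congr_ae (Filter.Eventually.of_forall fun ω => ?_)
      simp [sq]
    have e2 : (μ[|A])[X] = p⁻¹ * E := my_integral_cond μ A X
    rw [e1, e2]
  -- set integrals
  have hEA : ∫ ω in A, (X ω - kt) ∂μ = E - kt * p := by
    rw [integral_sub hXint.integrableOn (integrable_const kt).integrableOn,
      setIntegral_const, smul_eq_mul, measureReal_def, ← hpdef]
    ring
  have hEAm : ∫ ω in A, (X ω - m) ∂μ = E - m * p := by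
    rw [integral_sub hXint.integrableOn (integrable_const m).integrableOn,
      setIntegral_const, smul_eq_mul, measureReal_def, ← hpdef]
    ring
  -- positive part integrals
  have hI0 : ∫ ω, max (X ω - k₀) 0 ∂μ = ∫ ω in B0, (X ω - k₀) ∂μ :=
    my_pos_part_integral μ X hX k₀
  have hIt : ∫ ω, max (X ω - kt) 0 ∂μ = ∫ ω in Bt, (X ω - kt) ∂μ :=
    my_pos_part_integral μ X hX kt
  set I0 : ℝ := ∫ ω, max (X ω - k₀) 0 ∂μ with hI0def
  set It : ℝ := ∫ ω, max (X ω - kt) 0 ∂μ with hItdef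
  have hI0nn : 0 ≤ I0 := integral_nonneg fun ω => le_max_right _ _
  have hItnn : 0 ≤ It := integral_nonneg fun ω => le_max_right _ _
  -- hexp conversion
  have f1 : It * p ≤ (E - kt * p) * Pt := by
    rw [my_integral_cond, my_integral_cond, hEA, ← hIt] at hexp
    rw [inv_mul_eq_div, inv_mul_eq_div] at hexp
    exact (div_le_div_iff₀ hPtpos hpp).1 hexp
  -- the I0 bound
  have hc0 : 0 ≤ m - k₀ := sub_nonneg.2 (le_max_left _ _)
  have hct : 0 ≤ m - kt := sub_nonneg.2 (le_max_right _ _)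
  have hbm : 0 ≤ E - m * p := by
    rw [← hEAm]
    exact setIntegral_nonneg hAmeas fun ω hω => sub_nonneg.2 hω
  have f2 : I0 ≤ (E - m * p) + (m - k₀) * P0 := by
    have hmono : ∀ ω, max (X ω - k₀) 0
        ≤ max (X ω - m) 0 + Set.indicator B0 (fun _ => m - k₀) ω := by
      intro ω
      by_cases hk : k₀ ≤ X ω
      · rw [Set.indicator_of_mem (show ω ∈ B0 from hk)]
        rcases le_total (X ω) m with h | h
        · have h1 : max (X ω - k₀) 0 = X ω - k₀ := max_eq_left (by linarith)
          have h2 : (0 : ℝ) ≤ max (X ω - m) 0 := le_max_right _ _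
          linarith
        · rw [max_eq_left (by linarith : (0:ℝ) ≤ X ω - k₀),
            max_eq_left (by linarith : (0:ℝ) ≤ X ω - m)]
          linarith
      · rw [max_eq_right (by linarith [le_of_not_ge hk] : X ω - k₀ ≤ 0)]
        have h2 : (0:ℝ) ≤ max (X ω - m) 0 := le_max_right _ _
        have h3 : Set.indicator B0 (fun _ => m - k₀) ω = 0 := Set.indicator_of_notMem (show ω ∉ B0 from hk) _
        linarith
    have hint1 : Integrable (fun ω => max (X ω - m) 0) μ :=
      (hXint.sub (integrable_const m)).pos_part
    have hint2 : Integrable (fun ω => Set.indicator B0 (fun _ => m - k₀) ω) μ :=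
      (integrable_const (m - k₀)).indicator hB0meas
    calc I0 ≤ ∫ ω, (max (X ω - m) 0 + Set.indicator B0 (fun _ => m - k₀) ω) ∂μ :=
          integral_mono ((hXint.sub (integrable_const k₀)).pos_part) (hint1.add hint2) hmono
      _ = (E - m * p) + (m - k₀) * P0 := by
          rw [integral_add hint1 hint2, my_pos_part_integral μ X hX m, ← hAdef, hEAm,
            integral_indicator_const _ hB0meas, smul_eq_mul, measureReal_def, ← hP0def]
          ring
  -- key inequality
  have key : I0 * It * p ≤ (E - k₀ * p) * (E - kt * p) := by
    have hbt' : 0 ≤ E - kt * p := by nlinarith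
    have step1 : I0 * (It * p) ≤ I0 * ((E - kt * p) * Pt) :=
      mul_le_mul_of_nonneg_left f1 hI0nn
    have step2 : I0 * ((E - kt * p) * Pt) ≤ ((E - m * p) + (m - k₀) * P0) * ((E - kt * p) * Pt) :=
      mul_le_mul_of_nonneg_right f2 (mul_nonneg hbt' (le_of_lt hPtpos))
    have step3 : ((E - m * p) + (m - k₀) * P0) * Pt ≤ E - k₀ * p := by nlinarith
    nlinarith [mul_le_mul_of_nonneg_right step3 hbt']
  -- product integral
  have hJ : ∫ ω, max (X ω - k₀) 0 * max (X ω - kt) 0 ∂μ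
      = Q - (k₀ + kt) * E + k₀ * kt * p := by
    have hJ1 : ∫ ω, max (X ω - k₀) 0 * max (X ω - kt) 0 ∂μ
        = ∫ ω in A, (X ω - k₀) * (X ω - kt) ∂μ := by
      rw [← integral_indicator hAmeas]
      refine integral_congr_ae (Filter.Eventually.of_forall fun ω => ?_)
      dsimp only
      by_cases h : m ≤ X ω
      · have h0 : k₀ ≤ X ω := le_trans (le_max_left _ _) h
        have ht : kt ≤ X ω := le_trans (le_max_right _ _) h
        rw [Set.indicator_of_mem (show ω ∈ A from h), max_eq_left (sub_nonneg.2 h0),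
          max_eq_left (sub_nonneg.2 ht)]
      · rw [Set.indicator_of_notMem (show ω ∉ A from h)]
        rcases lt_max_iff.1 (lt_of_not_ge h) with h' | h'
        · rw [max_eq_right (sub_nonpos.2 h'.le), zero_mul]
        · rw [max_eq_right (sub_nonpos.2 h'.le), mul_zero]
    rw [hJ1]
    have hcong : ∫ ω in A, (X ω - k₀) * (X ω - kt) ∂μ
        = ∫ ω in A, (X ω * X ω - (k₀ + kt) * X ω + k₀ * kt) ∂μ := by
      refine integral_congr_ae (Filter.Eventually.of_forall fun ω => ?_)
      ring
    have i1 : IntegrableOn (fun ω => X ω * X ω) A μ := hX2int.integrableOn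
    have i2 : IntegrableOn (fun ω => (k₀ + kt) * X ω) A μ := (hXint.const_mul _).integrableOn
    have i12 : IntegrableOn (fun ω => X ω * X ω - (k₀ + kt) * X ω) A μ := i1.sub i2
    rw [hcong, integral_add i12 (integrable_const _).integrableOn,
      integral_sub i1 i2, integral_const_mul, setIntegral_const, smul_eq_mul, measureReal_def, ← hpdef]
    ring
  -- finish
  rw [hvar, hJ]
  have h1 : (p⁻¹ * Q - (p⁻¹ * E) ^ 2) * p = Q - E ^ 2 / p := by
    field_simp
  have h2' : I0 * It ≤ (E - k₀ * p) * (E - kt * p) / p := by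
    rw [le_div_iff₀ hpp]
    exact key
  have h3 : (E - k₀ * p) * (E - kt * p) / p = E ^ 2 / p - (k₀ + kt) * E + k₀ * kt * p := by
    field_simp
    ring
  rw [h1]
  linarith [h2', h3.le, h3.ge]
end

section
/- Let X be a random variable with stretched-exponential tail P(X > x) = e^{−x^β} for x ≥ 0 with β ∈ (0,1]. Then there exists c > 0 such that Var(X | X > k) ≥ c for all k ≥ 0. -/
open MeasureTheory ProbabilityTheory

open Real Set
open scoped ENNReal NNReal

lemma integrableOn_exp_neg_rpow {q : ℝ} (hq : 0 < q) :
    IntegrableOn (fun t : ℝ => Real.exp (-(t ^ q))) (Ioi 0) := by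
  rw [← integrableOn_Ioi_comp_rpow_iff' (fun t : ℝ => Real.exp (-(t ^ q)))
    (one_div_ne_zero hq.ne')]
  have h := Real.GammaIntegral_convergent (show (0:ℝ) < 1/q by positivity)
  refine h.congr_fun (fun x hx => ?_) measurableSet_Ioi
  have hx0 : (0:ℝ) < x := hx
  rw [smul_eq_mul, ← Real.rpow_mul hx0.le, one_div_mul_cancel hq.ne', Real.rpow_one, mul_comm]

lemma memLp_two_of_surv {Ω : Type*} [MeasurableSpace Ω] (μ : Measure Ω)
    [IsProbabilityMeasure μ] (X : Ω → ℝ) (hX : Measurable X)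
    {β : ℝ} (hβ0 : 0 < β)
    (hsurv : ∀ x : ℝ, 0 ≤ x → μ {ω | x < X ω} = ENNReal.ofReal (Real.exp (-(x ^ β))))
    (hpos : ∀ᵐ ω ∂μ, 0 < X ω) :
    MemLp X 2 μ := by
  rw [memLp_two_iff_integrable_sq hX.aestronglyMeasurable]
  refine ⟨(hX.pow_const 2).aestronglyMeasurable, ?_⟩
  rw [HasFiniteIntegral]
  have hnn : ∀ ω, ‖X ω ^ 2‖ₑ = ENNReal.ofReal (X ω ^ 2) := fun ω => by
    rw [← Real.enorm_eq_ofReal (sq_nonneg _)]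
  simp_rw [hnn]
  rw [lintegral_eq_lintegral_meas_lt μ (ae_of_all _ fun ω => sq_nonneg _)
    ((hX.pow_const 2).aemeasurable)]
  have hmeas : ∀ t ∈ Ioi (0:ℝ), μ {a | t < X a ^ 2} =
      ENNReal.ofReal (Real.exp (-(t ^ (β/2)))) := by
    intro t ht
    have ht0 : (0:ℝ) < t := ht
    have hae : {a | t < X a ^ 2} =ᵐ[μ] {a | Real.sqrt t < X a} := by
      filter_upwards [hpos] with ω hω
      simp only [eq_iff_iff, Set.mem_setOf_eq]
      constructor
      · intro h; exact (Real.sqrt_lt' hω).mpr h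
      · intro h; exact (Real.sqrt_lt' hω).mp h
    rw [measure_congr hae, hsurv _ (Real.sqrt_nonneg t), Real.sqrt_eq_rpow,
      ← Real.rpow_mul ht0.le]
    norm_num
    ring_nf
  rw [setLIntegral_congr_fun measurableSet_Ioi hmeas]
  have := (integrableOn_exp_neg_rpow (q := β/2) (by positivity)).lintegral_lt_top
  exact this

/-- For a random variable with stretched-exponential tail `P(X > x) = e^{−x^β}`, `β ∈ (0,1]`,
there is a `c > 0` with `Var(X | X > k) ≥ c` for all `k ≥ 0`. -/
theorem stretched_exp_conditional_var {Ω : Type*} [MeasurableSpace Ω] (μ : Measure Ω)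
    [IsProbabilityMeasure μ] (X : Ω → ℝ) (hX : Measurable X)
    (β : ℝ) (hβ : β ∈ Set.Ioc (0 : ℝ) 1)
    (hsurv : ∀ x : ℝ, 0 ≤ x → μ {ω | x < X ω} = ENNReal.ofReal (Real.exp (-(x ^ β)))) :
    ∃ c > 0, ∀ k : ℝ, 0 ≤ k →
      c ≤ variance X (ProbabilityTheory.cond μ {ω | k < X ω}) := by
  obtain ⟨hβ0, hβ1⟩ := hβ
  have hexp2 : (0:ℝ) < Real.exp (-2) / 4 := by positivity
  refine ⟨Real.exp (-2) / 4, hexp2, ?_⟩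
  intro k hk
  -- positivity of X a.s.
  have hpos : ∀ᵐ ω ∂μ, 0 < X ω := by
    have h0 : μ {ω | 0 < X ω} = 1 := by
      rw [hsurv 0 le_rfl, Real.zero_rpow hβ0.ne', neg_zero, Real.exp_zero,
        ENNReal.ofReal_one]
    have hms : MeasurableSet {ω | 0 < X ω} := measurableSet_lt measurable_const hX
    rw [ae_iff]
    have hcompl : {ω | ¬ 0 < X ω} = {ω | 0 < X ω}ᶜ := rfl
    rw [hcompl, prob_compl_eq_zero_iff hms]
    exact h0
  set S : Set Ω := {ω | k < X ω} with hSdef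
  have hSm : MeasurableSet S := measurableSet_lt measurable_const hX
  have hμS : μ S = ENNReal.ofReal (Real.exp (-(k ^ β))) := hsurv k hk
  have hS0 : μ S ≠ 0 := by
    rw [hμS]; simp [Real.exp_pos]
  have hSfin : μ S ≠ ⊤ := measure_ne_top μ S
  set ν := μ[|S] with hνdef
  haveI hνprob : IsProbabilityMeasure ν := cond_isProbabilityMeasure hS0
  -- L² membership under ν
  have hL2μ : MemLp X 2 μ := memLp_two_of_surv μ X hX hβ0 hsurv hpos
  have hL2ν : MemLp X 2 ν := by
    rw [hνdef, ProbabilityTheory.cond]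
    exact (hL2μ.restrict S).smul_measure (by simp [hμS, Real.exp_pos])
  -- the two cut points
  set m : ℝ := (k ^ β + 1) ^ (1/β) with hmdef
  set M : ℝ := (k ^ β + 2) ^ (1/β) with hMdef
  have hs0 : (0:ℝ) ≤ k ^ β := Real.rpow_nonneg hk β
  have hm0 : (0:ℝ) ≤ m := Real.rpow_nonneg (by linarith) _
  have hmβ : m ^ β = k ^ β + 1 := by
    rw [hmdef, ← Real.rpow_mul (by linarith : (0:ℝ) ≤ k ^ β + 1),
      one_div_mul_cancel hβ0.ne', Real.rpow_one]
  have hMβ : M ^ β = k ^ β + 2 := by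
    rw [hMdef, ← Real.rpow_mul (by linarith : (0:ℝ) ≤ k ^ β + 2),
      one_div_mul_cancel hβ0.ne', Real.rpow_one]
  have hkm : k < m := by
    have : k = (k ^ β) ^ (1/β) := by
      rw [← Real.rpow_mul hk, mul_one_div_cancel hβ0.ne', Real.rpow_one]
    rw [this, hmdef]
    exact Real.rpow_lt_rpow hs0 (by linarith) (by positivity)
  have hmM : m + 1 ≤ M := by
    have h1 : (1:ℝ) ≤ 1/β := (le_div_iff₀ hβ0).mpr (by linarith)
    have hnn := NNReal.add_rpow_le_rpow_add (Real.toNNReal (k ^ β + 1)) 1 h1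
    have hcoe := (NNReal.coe_le_coe).mpr hnn
    push_cast [NNReal.coe_rpow, Real.coe_toNNReal _ (by linarith : (0:ℝ) ≤ k ^ β + 1)] at hcoe
    rw [show (k ^ β + 1 + 1 : ℝ) = k ^ β + 2 by ring] at hcoe
    rw [hmdef, hMdef]
    simpa using hcoe
  -- survival probabilities under ν
  have hcond : ∀ x : ℝ, k < x → ν {ω | x < X ω} =
      ENNReal.ofReal (Real.exp (k ^ β - x ^ β)) := by
    intro x hx
    have hx0 : (0:ℝ) ≤ x := le_trans hk hx.le
    have hsub : {ω | x < X ω} ⊆ S := fun ω hω => lt_trans hx hω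
    rw [hνdef, cond_apply hSm, Set.inter_eq_self_of_subset_right hsub, hsurv x hx0, hμS,
      ← ENNReal.ofReal_inv_of_pos (Real.exp_pos _), ← ENNReal.ofReal_mul (by positivity),
      ← Real.exp_neg, ← Real.exp_add]
    congr 2
    ring
  have hMk : k < M := lt_trans hkm (by linarith)
  have hB : ν {ω | M < X ω} = ENNReal.ofReal (Real.exp (-2)) := by
    rw [hcond M hMk, hMβ]
    congr 2
    ring
  have hmlt : ν {ω | m < X ω} = ENNReal.ofReal (Real.exp (-1)) := by
    rw [hcond m hkm, hmβ]
    congr 2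
    ring
  have hAc : ν {ω | m < X ω}ᶜ = 1 - ENNReal.ofReal (Real.exp (-1)) := by
    rw [measure_compl (measurableSet_lt measurable_const hX) (measure_ne_top _ _), hmlt,
      measure_univ]
  -- variance as an integral
  set a := ∫ ω, X ω ∂ν with hadef
  have hvar : variance X ν = ∫ ω, (X ω - a) ^ 2 ∂ν := by
    rw [variance_eq_integral hX.aemeasurable]
  have hsqint : Integrable (fun ω => (X ω - a) ^ 2) ν := by
    simpa using (hL2ν.sub (memLp_const a)).integrable_sq
  have key : ∀ T : Set Ω, MeasurableSet T → (∀ ω ∈ T, 1/2 ≤ |X ω - a|) →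
      (ν T).toReal / 4 ≤ variance X ν := by
    intro T hT hge
    rw [hvar]
    have h1 : ∫ ω in T, (X ω - a) ^ 2 ∂ν ≤ ∫ ω, (X ω - a) ^ 2 ∂ν :=
      setIntegral_le_integral hsqint (ae_of_all _ fun ω => sq_nonneg _)
    have h2 : (1/4 : ℝ) * (ν T).toReal ≤ ∫ ω in T, (X ω - a) ^ 2 ∂ν := by
      rw [show (1/4:ℝ) * (ν T).toReal = ν.real T • (1/4:ℝ) by rw [smul_eq_mul, mul_comm]; rfl]
      apply setIntegral_ge_of_const_le hT (measure_ne_top _ _)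
      · intro ω hω
        nlinarith [hge ω hω, abs_nonneg (X ω - a), sq_abs (X ω - a)]
      · exact hsqint.integrableOn
    linarith
  by_cases hc : a ≤ (m + M) / 2
  · have hT : MeasurableSet {ω | M < X ω} := measurableSet_lt measurable_const hX
    have hge : ∀ ω ∈ {ω | M < X ω}, 1/2 ≤ |X ω - a| := by
      intro ω hω
      have h1 : M < X ω := hω
      have h2 : X ω - a ≥ 1/2 := by linarith [hmM, hc]
      calc (1/2 : ℝ) ≤ X ω - a := h2
      _ ≤ |X ω - a| := le_abs_self _
    have := key _ hT hge
    rw [hB, ENNReal.toReal_ofReal (Real.exp_nonneg _)] at this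
    linarith
  · push_neg at hc
    have hT : MeasurableSet {ω | m < X ω}ᶜ := (measurableSet_lt measurable_const hX).compl
    have hge : ∀ ω ∈ {ω | m < X ω}ᶜ, 1/2 ≤ |X ω - a| := by
      intro ω hω
      have h1 : X ω ≤ m := not_lt.mp hω
      have h2 : a - X ω ≥ 1/2 := by linarith [hmM, hc]
      calc (1/2 : ℝ) ≤ a - X ω := h2
      _ ≤ |a - X ω| := le_abs_self _
      _ = |X ω - a| := abs_sub_comm _ _
    have := key _ hT hge
    rw [hAc] at this
    have htr : (1 - ENNReal.ofReal (Real.exp (-1))).toReal = 1 - Real.exp (-1) := by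
      rw [ENNReal.toReal_sub_of_le _ ENNReal.one_ne_top, ENNReal.toReal_one,
        ENNReal.toReal_ofReal (Real.exp_nonneg _)]
      exact ENNReal.ofReal_le_one.mpr (by
        rw [show (1:ℝ) = Real.exp 0 by rw [Real.exp_zero]]
        exact Real.exp_le_exp.mpr (by norm_num))
    rw [htr] at this
    have he1 : Real.exp (-1) ≤ 1/2 := by
      rw [Real.exp_neg]
      have h2 : (2:ℝ) ≤ Real.exp 1 := by nlinarith [Real.exp_one_gt_d9]
      calc (Real.exp 1)⁻¹ ≤ 2⁻¹ := by
            apply inv_anti₀ (by norm_num) h2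
      _ = 1/2 := by norm_num
    have he2 : Real.exp (-2) ≤ Real.exp (-1) := Real.exp_le_exp.mpr (by norm_num)
    linarith
end
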